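/- arXiv:1706.02016 — 2 statements merged into one kernel-verified Lean document; each statement's English description precedes it below -/
import Mathlib

section
/- Let H_1, ..., H_n be subnormal subgroups of a finite group G. Then the subgroup K generated by H_1, ..., H_n is subnormal in G. -/
/-- `H` is subnormal in `G`: there is a chain `H = f 0 ⊴ f 1 ⊴ ... ⊴ f n = ⊤`. -/
def IsSubnormal {G : Type*} [Group G] (H : Subgroup G) : Prop :=
  ∃ (n : ℕ) (f : Fin (n + 1) → Subgroup G),
    f 0 = H ∧ f (Fin.last n) = ⊤ ∧
    ∀ i : Fin n, f i.castSucc ≤ f i.succ ∧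
      ((f i.castSucc).subgroupOf (f i.succ)).Normal

section Aux

open Subgroup Relation

variable {G : Type*} [Group G]

/-- One step of a subnormal chain, phrased with explicit conjugation. -/
def Step {G : Type*} [Group G] (A B : Subgroup G) : Prop :=
  A ≤ B ∧ ∀ b ∈ B, ∀ a ∈ A, b * a * b⁻¹ ∈ A

/-- Relative subnormality as reflexive-transitive closure of `Step`. -/
def SnIn {G : Type*} [Group G] (A B : Subgroup G) : Prop :=
  Relation.ReflTransGen Step A B

lemma step_iff {A B : Subgroup G} :
    (A ≤ B ∧ (A.subgroupOf B).Normal) ↔ Step A B := by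
  constructor
  · rintro ⟨hle, hn⟩
    refine ⟨hle, fun b hb a ha => ?_⟩
    have := hn.conj_mem ⟨a, hle ha⟩ (by simpa [Subgroup.mem_subgroupOf] using ha) ⟨b, hb⟩
    simpa [Subgroup.mem_subgroupOf] using this
  · rintro ⟨hle, hc⟩
    refine ⟨hle, ⟨fun n hn g => ?_⟩⟩
    simp only [Subgroup.mem_subgroupOf] at hn ⊢
    exact hc g g.2 n hn

lemma SnIn.le {A B : Subgroup G} (h : SnIn A B) : A ≤ B := by
  induction h with
  | refl => exact le_rfl
  | tail _ hstep ih => exact ih.trans hstep.1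

lemma SnIn.inf {A B : Subgroup G} (K : Subgroup G) (h : SnIn A B) :
    SnIn (A ⊓ K) (B ⊓ K) := by
  induction h with
  | refl => exact Relation.ReflTransGen.refl
  | tail _ hstep ih =>
      refine ih.tail ⟨inf_le_inf_right K hstep.1, ?_⟩
      rintro b ⟨hb1, hb2⟩ a ⟨ha1, ha2⟩
      exact ⟨hstep.2 b hb1 a ha1, K.mul_mem (K.mul_mem hb2 ha2) (K.inv_mem hb2)⟩

lemma SnIn.map {N : Type*} [Group N] (f : G →* N) {A B : Subgroup G} (h : SnIn A B) :
    SnIn (A.map f) (B.map f) := by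
  induction h with
  | refl => exact Relation.ReflTransGen.refl
  | tail _ hstep ih =>
      refine ih.tail ⟨Subgroup.map_mono hstep.1, ?_⟩
      rintro b hb a ha
      rcases hb with ⟨b', hb', rfl⟩
      rcases ha with ⟨a', ha', rfl⟩
      exact ⟨b' * a' * b'⁻¹, hstep.2 b' hb' a' ha', by simp⟩

lemma SnIn.comap {N : Type*} [Group N] (f : G →* N) {A B : Subgroup N} (h : SnIn A B) :
    SnIn (A.comap f) (B.comap f) := by
  induction h with
  | refl => exact Relation.ReflTransGen.refl
  | tail _ hstep ih =>
      refine ih.tail ⟨Subgroup.comap_mono hstep.1, ?_⟩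
      intro b hb a ha
      simp only [Subgroup.mem_comap, map_mul, map_inv] at *
      exact hstep.2 _ hb _ ha

lemma SnIn.subgroupOf {A B : Subgroup G} (T : Subgroup G) (h : SnIn A B) :
    SnIn (A.subgroupOf T) (B.subgroupOf T) :=
  h.comap T.subtype

lemma isSubnormal_iff_snIn {H : Subgroup G} : _root_.IsSubnormal H ↔ SnIn H ⊤ := by
  constructor
  · rintro ⟨n, f, h0, hl, hs⟩
    have key : ∀ j : Fin (n + 1), SnIn (f j) ⊤ := by
      intro j
      induction j using Fin.reverseInduction with
      | last => rw [hl]; exact Relation.ReflTransGen.refl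
      | cast i ih => exact Relation.ReflTransGen.head (step_iff.mp (hs i)) ih
    rw [← h0]; exact key 0
  · intro h
    suffices hgen : ∀ (A B : Subgroup G), SnIn A B →
        ∃ (n : ℕ) (f : Fin (n + 1) → Subgroup G),
          f 0 = A ∧ f (Fin.last n) = B ∧
          ∀ i : Fin n, f i.castSucc ≤ f i.succ ∧
            ((f i.castSucc).subgroupOf (f i.succ)).Normal by
      exact hgen H ⊤ h
    intro A B h
    induction h with
    | refl => exact ⟨0, fun _ => A, rfl, rfl, fun i => i.elim0⟩
    | @tail b c _ hstep ih =>
        obtain ⟨n, f, h0, hl, hs⟩ := ih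
        refine ⟨n + 1, Fin.snoc f c, ?_, ?_, ?_⟩
        · have : (0 : Fin (n + 2)) = Fin.castSucc 0 := rfl
          rw [this, Fin.snoc_castSucc]; exact h0
        · simp [Fin.snoc_last]
        · intro i
          induction i using Fin.lastCases with
          | last =>
              have e1 : (Fin.last n).castSucc = Fin.castSucc (Fin.last n) := rfl
              have e2 : (Fin.last n).succ = Fin.last (n + 1) := rfl
              rw [e1, e2, Fin.snoc_castSucc, Fin.snoc_last, hl]
              exact step_iff.mpr hstep
          | cast j =>
              have e2 : (Fin.castSucc j).succ = Fin.castSucc j.succ := by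
                rw [Fin.succ_castSucc]
              rw [e2, Fin.snoc_castSucc, Fin.snoc_castSucc]
              exact hs j


/-- Conjugate of a subgroup, with membership-friendly API. -/
def pconj (g : G) (W : Subgroup G) : Subgroup G where
  carrier := {x | g⁻¹ * x * g ∈ W}
  one_mem' := by simpa using W.one_mem
  mul_mem' := by
    intro a b ha hb
    have : g⁻¹ * (a * b) * g = (g⁻¹ * a * g) * (g⁻¹ * b * g) := by group
    simpa [this] using W.mul_mem ha hb
  inv_mem' := by
    intro a ha
    have : g⁻¹ * a⁻¹ * g = (g⁻¹ * a * g)⁻¹ := by group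
    simpa [this] using W.inv_mem ha

lemma mem_pconj {g x : G} {W : Subgroup G} : x ∈ pconj g W ↔ g⁻¹ * x * g ∈ W := Iff.rfl

lemma mem_pconj' {g x : G} {W : Subgroup G} (h : x ∈ W) : g * x * g⁻¹ ∈ pconj g W := by
  rw [mem_pconj]
  have : g⁻¹ * (g * x * g⁻¹) * g = x := by group
  rwa [this]

lemma pconj_pconj (g : G) (W : Subgroup G) : pconj g (pconj g⁻¹ W) = W := by
  ext x
  simp only [mem_pconj, inv_inv]
  constructor
  · intro h
    have : g * (g⁻¹ * x * g) * g⁻¹ = x := by group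
    rwa [this] at h
  · intro h
    have : g * (g⁻¹ * x * g) * g⁻¹ = x := by group
    rwa [this]

lemma pconj_eq_map (g : G) (W : Subgroup G) :
    pconj g W = W.map (MulAut.conj g).toMonoidHom := by
  ext x
  simp only [mem_pconj, Subgroup.mem_map, MulEquiv.coe_toMonoidHom, MulAut.conj_apply]
  constructor
  · intro h
    exact ⟨g⁻¹ * x * g, h, by group⟩
  · rintro ⟨w, hw, rfl⟩
    have : g⁻¹ * (g * w * g⁻¹) * g = w := by group
    rwa [this]

lemma card_lt_of_ne_top {G : Type*} [Group G] [Finite G] {T : Subgroup G} (h : T ≠ ⊤) :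
    Nat.card T < Nat.card G := by
  have h1 : (T : Set G) ⊂ Set.univ := by
    refine ⟨Set.subset_univ _, fun hsub => h ?_⟩
    have : (T : Set G) = Set.univ := Set.eq_univ_of_univ_subset hsub
    exact SetLike.coe_injective (by simpa using this)
  calc Nat.card T = (T : Set G).ncard := Nat.card_coe_set_eq _
    _ < (Set.univ : Set G).ncard := Set.ncard_lt_ncard h1 Set.finite_univ
    _ = Nat.card G := Set.ncard_univ G

lemma card_quotient_lt {G : Type*} [Group G] [Finite G] {V : Subgroup G} [V.Normal]
    (h : V ≠ ⊥) : Nat.card (G ⧸ V) < Nat.card G := by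
  have hV : 1 < Nat.card V := by
    rw [Finite.one_lt_card_iff_nontrivial]
    exact (Subgroup.nontrivial_iff_ne_bot V).mpr h
  have hq : 0 < Nat.card (G ⧸ V) := Nat.card_pos
  have := Subgroup.card_eq_card_quotient_mul_card_subgroup V
  nlinarith

lemma exists_minimal_subgroup {G : Type*} [Group G] [Finite G] (S : Set (Subgroup G))
    (h : S.Nonempty) : ∃ W ∈ S, ∀ U ∈ S, U ≤ W → U = W := by
  have : Finite (Subgroup G) :=
    Finite.of_injective (fun H => (H : Set G)) SetLike.coe_injective
  obtain ⟨W, hW, hmin⟩ := (Set.toFinite S).exists_minimal h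
  exact ⟨W, hW, fun U hU hle => le_antisymm hle (hmin hU hle)⟩

/-- A proper subnormal subgroup is contained in a proper normal subgroup. -/
lemma exists_proper_normal_over {H : Subgroup G} (h : SnIn H ⊤) (hne : H ≠ ⊤) :
    ∃ M : Subgroup G, M.Normal ∧ H ≤ M ∧ M ≠ ⊤ := by
  suffices hgen : ∀ (A B : Subgroup G), SnIn A B → B = ⊤ → A ≠ ⊤ →
      ∃ M : Subgroup G, M.Normal ∧ A ≤ M ∧ M ≠ ⊤ from hgen H ⊤ h rfl hne
  intro A B h
  induction h with
  | refl => intro hB hA; exact absurd hB hA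
  | @tail P B hchain hstep ih =>
      intro hB hA
      by_cases hP : P = ⊤
      · exact ih hP hA
      · refine ⟨P, ⟨fun n hn g => ?_⟩, SnIn.le hchain, hP⟩
        exact hstep.2 g (by rw [hB]; trivial) n hn

/-- `subgroupOf` commutes with suprema of subgroups below `T`. -/
lemma iSup_subgroupOf {ι : Sort*} (H : ι → Subgroup G) (T : Subgroup G)
    (h : ∀ i, H i ≤ T) : (⨆ i, (H i).subgroupOf T) = (⨆ i, H i).subgroupOf T := by
  apply Subgroup.map_injective T.subtype_injective
  rw [Subgroup.map_iSup]
  rw [Subgroup.subgroupOf_map_subtype, inf_eq_left.mpr (iSup_le h)]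
  refine iSup_congr fun i => ?_
  rw [Subgroup.subgroupOf_map_subtype, inf_eq_left.mpr (h i)]


lemma pconj_mono {g : G} {W W' : Subgroup G} (h : W ≤ W') : pconj g W ≤ pconj g W' :=
  fun _ hx => h hx

lemma pconj_bot (g : G) : pconj g (⊥ : Subgroup G) = ⊥ := by
  ext x
  simp only [mem_pconj, Subgroup.mem_bot]
  constructor
  · intro h
    have : x = g * (g⁻¹ * x * g) * g⁻¹ := by group
    rw [this, h]; group
  · rintro rfl; group

lemma pconj_inv_pconj (g : G) (W : Subgroup G) : pconj g⁻¹ (pconj g W) = W := by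
  have := pconj_pconj g⁻¹ W
  rwa [inv_inv] at this

lemma pconj_ne_bot {g : G} {W : Subgroup G} (h : W ≠ ⊥) : pconj g W ≠ ⊥ := by
  intro hcon
  apply h
  have := congrArg (pconj g⁻¹) hcon
  rwa [pconj_inv_pconj, pconj_bot] at this

universe u

/-- Minimal normal subgroups normalize every subnormal subgroup (finite groups). -/
lemma min_normal_normalizes :
    ∀ (N : ℕ) (G : Type u) [Group G] [Finite G], Nat.card G ≤ N →
      ∀ (V H : Subgroup G), V.Normal → V ≠ ⊥ →
        (∀ U : Subgroup G, U.Normal → U ≠ ⊥ → U ≤ V → U = V) →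
        SnIn H ⊤ → ∀ v ∈ V, ∀ h ∈ H, v * h * v⁻¹ ∈ H := by
  intro N
  induction N with
  | zero =>
      intro G _ _ hle
      have : 0 < Nat.card G := Nat.card_pos
      omega
  | succ N ih =>
    intro G _ _ hle V H hVn hVbot hVmin hH v hv h hh
    by_cases hHtop : H = ⊤
    · rw [hHtop]; trivial
    set M := Subgroup.normalClosure (H : Set G) with hMdef
    have hMn : M.Normal := Subgroup.normalClosure_normal
    have hHM : H ≤ M := Subgroup.le_normalClosure
    have hMtop : M ≠ ⊤ := by
      obtain ⟨M', hM'n, hHM', hM'⟩ := exists_proper_normal_over hH hHtop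
      intro hcon
      haveI := hM'n
      have hle2 : M ≤ M' := Subgroup.normalClosure_le_normal hHM'
      rw [hcon] at hle2
      exact hM' (top_le_iff.mp hle2)
    have hHsnM : SnIn H M := by
      have := SnIn.inf M hH
      rwa [inf_eq_left.mpr hHM, top_inf_eq] at this
    by_cases hVM : V ⊓ M = ⊥
    · -- V centralizes M ⊇ H
      have hmem : v * h * v⁻¹ * h⁻¹ ∈ V ⊓ M := by
        constructor
        · have h2 : h * v⁻¹ * h⁻¹ ∈ V := hVn.conj_mem v⁻¹ (V.inv_mem hv) h
          have e : v * h * v⁻¹ * h⁻¹ = v * (h * v⁻¹ * h⁻¹) := by group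
          rw [e]; exact V.mul_mem hv h2
        · have h1 : v * h * v⁻¹ ∈ M := hMn.conj_mem h (hHM hh) v
          exact M.mul_mem h1 (M.inv_mem (hHM hh))
      rw [hVM, Subgroup.mem_bot] at hmem
      have e : v * h * v⁻¹ = h := by
        have : v * h * v⁻¹ = (v * h * v⁻¹ * h⁻¹) * h := by group
        rw [this, hmem]; group
      rw [e]; exact hh
    · -- here V ≤ M
      have hVleM : V ≤ M := by
        have hn : (V ⊓ M).Normal :=
          ⟨fun n hn g => ⟨hVn.conj_mem n hn.1 g, hMn.conj_mem n hn.2 g⟩⟩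
        have := hVmin (V ⊓ M) hn hVM inf_le_left
        conv_lhs => rw [← this]
        exact inf_le_right
      set S : Set (Subgroup G) :=
        {W | W ≠ ⊥ ∧ W ≤ V ∧ ∀ m ∈ M, ∀ w ∈ W, m * w * m⁻¹ ∈ W} with hSdef
      have hSne : S.Nonempty := ⟨V, hVbot, le_rfl, fun m _ w hw => hVn.conj_mem w hw m⟩
      obtain ⟨W, ⟨hWbot, hWV, hWM⟩, hWmin⟩ := exists_minimal_subgroup S hSne
      have hMcard : Nat.card M ≤ N := by
        have := card_lt_of_ne_top (G := G) hMtop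
        omega
      -- every conjugate of W normalizes H
      have key : ∀ g : G, ∀ x ∈ pconj g W, ∀ h' ∈ H, x * h' * x⁻¹ ∈ H := by
        intro g
        set W' := pconj g W with hW'def
        have hW'V : W' ≤ V := by
          intro x hx
          rw [mem_pconj] at hx
          have := hVn.conj_mem _ (hWV hx) g
          have e : g * (g⁻¹ * x * g) * g⁻¹ = x := by group
          rwa [e] at this
        have hW'M : W' ≤ M := hW'V.trans hVleM
        have hW'bot : W' ≠ ⊥ := pconj_ne_bot hWbot
        have hW'conj : ∀ m ∈ M, ∀ x ∈ W', m * x * m⁻¹ ∈ W' := by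
          intro m hm x hx
          rw [hW'def, mem_pconj] at hx ⊢
          have hm' : g⁻¹ * m * g ∈ M := by
            have := hMn.conj_mem m hm g⁻¹
            simpa using this
          have := hWM _ hm' _ hx
          have e : (g⁻¹ * m * g) * (g⁻¹ * x * g) * (g⁻¹ * m * g)⁻¹
              = g⁻¹ * (m * x * m⁻¹) * g := by group
          rwa [e] at this
        -- transfer to the group M and apply the induction hypothesis
        have hVn' : (W'.subgroupOf M).Normal := by
          constructor
          rintro ⟨n, hnM⟩ hn ⟨m, hmM⟩
          rw [Subgroup.mem_subgroupOf] at hn ⊢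
          exact hW'conj m hmM n hn
        have hVbot' : W'.subgroupOf M ≠ ⊥ := by
          rw [Subgroup.ne_bot_iff_exists_ne_one] at hW'bot ⊢
          obtain ⟨⟨w, hw⟩, hwne⟩ := hW'bot
          refine ⟨⟨⟨w, hW'M hw⟩, by rwa [Subgroup.mem_subgroupOf]⟩, ?_⟩
          simp only [ne_eq, Subgroup.mk_eq_one] at hwne ⊢
          intro hcon
          exact hwne hcon
        have hVmin' : ∀ U : Subgroup M, U.Normal → U ≠ ⊥ → U ≤ W'.subgroupOf M →
            U = W'.subgroupOf M := by
          intro U hUn hUbot hUle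
          set U0 := U.map M.subtype with hU0def
          have hU0le : U0 ≤ W' := by
            have := Subgroup.map_mono (f := M.subtype) hUle
            rwa [Subgroup.subgroupOf_map_subtype, inf_eq_left.mpr hW'M] at this
          have hU0bot : U0 ≠ ⊥ := by
            intro hcon
            apply hUbot
            rw [Subgroup.map_eq_bot_iff, Subgroup.ker_subtype, le_bot_iff] at hcon
            exact hcon
          have hU0conj : ∀ m ∈ M, ∀ u ∈ U0, m * u * m⁻¹ ∈ U0 := by
            rintro m hm u hu
            rcases hu with ⟨u', hu', rfl⟩
            have := hUn.conj_mem u' hu' ⟨m, hm⟩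
            exact ⟨_, this, rfl⟩
          -- conjugate back by g⁻¹ and use minimality of W
          have hback : pconj g⁻¹ U0 ∈ S := by
            refine ⟨pconj_ne_bot hU0bot, ?_, ?_⟩
            · have h1 : pconj g⁻¹ U0 ≤ pconj g⁻¹ W' := pconj_mono hU0le
              rw [hW'def, pconj_inv_pconj] at h1
              exact h1.trans hWV
            · intro m hm x hx
              rw [mem_pconj] at hx ⊢
              have hm' : g * m * g⁻¹ ∈ M := hMn.conj_mem m hm g
              have := hU0conj _ hm' _ hx
              have e : (g * m * g⁻¹) * ((g⁻¹)⁻¹ * x * g⁻¹) * (g * m * g⁻¹)⁻¹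
                  = (g⁻¹)⁻¹ * (m * x * m⁻¹) * g⁻¹ := by group
              rwa [e] at this
          have hWeq : pconj g⁻¹ U0 = W := by
            apply hWmin _ hback
            have h1 : pconj g⁻¹ U0 ≤ pconj g⁻¹ W' := pconj_mono hU0le
            rwa [hW'def, pconj_inv_pconj] at h1
          have hU0eq : U0 = W' := by
            have := congrArg (pconj g) hWeq
            rwa [pconj_pconj] at this
          have : U0.comap M.subtype = U :=
            Subgroup.comap_map_eq_self_of_injective M.subtype_injective U
          rw [← this, hU0eq]
          rfl
        have hHsn' : SnIn (H.subgroupOf M) ⊤ := by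
          have := SnIn.subgroupOf M hHsnM
          rwa [Subgroup.subgroupOf_self] at this
        have hconc := ih M hMcard (W'.subgroupOf M) (H.subgroupOf M) hVn' hVbot' hVmin' hHsn'
        intro x hx h' hh'
        have hxM : x ∈ M := hW'M hx
        have := hconc ⟨x, hxM⟩ (by rwa [Subgroup.mem_subgroupOf]) ⟨h', hHM hh'⟩
          (by rwa [Subgroup.mem_subgroupOf])
        rw [Subgroup.mem_subgroupOf] at this
        simpa using this
      -- conclude: V = normalClosure W ≤ normalizer H
      have hNC : Subgroup.normalClosure (W : Set G) = V := by
        apply hVmin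
        · exact Subgroup.normalClosure_normal
        · intro hcon
          apply hWbot
          have := Subgroup.le_normalClosure (H := W)
          rw [hcon, le_bot_iff] at this
          exact this
        · haveI := hVn
          exact Subgroup.normalClosure_le_normal (fun x hx => hWV hx)
      have hnorm : Subgroup.normalClosure (W : Set G) ≤ Subgroup.normalizer (H : Set G) := by
        rw [Subgroup.normalClosure]
        rw [Subgroup.closure_le]
        intro x hx
        rw [Group.mem_conjugatesOfSet_iff] at hx
        obtain ⟨w, hw, hconj⟩ := hx
        obtain ⟨c, hc⟩ := isConj_iff.mp hconj
        have hxc : x ∈ pconj c W := by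
          rw [← hc]; exact mem_pconj' hw
        rw [SetLike.mem_coe, Subgroup.mem_normalizer_iff]
        intro n
        constructor
        · intro hn; exact key c x hxc n hn
        · intro hn
          have := key c x⁻¹ ((pconj c W).inv_mem hxc) _ hn
          have e : x⁻¹ * (x * n * x⁻¹) * x⁻¹⁻¹ = n := by group
          rwa [e] at this
      have hvnorm : v ∈ Subgroup.normalizer (H : Set G) := hnorm (by rw [hNC]; exact hv)
      exact (Subgroup.mem_normalizer_iff.mp hvnorm h).mp hh


universe v

lemma snIn_iSup :
    ∀ (N : ℕ) (G : Type u) [Group G] [Finite G], Nat.card G ≤ N →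
      ∀ {ι : Sort v} (H : ι → Subgroup G), (∀ i, SnIn (H i) ⊤) → SnIn (⨆ i, H i) ⊤ := by
  intro N
  induction N with
  | zero =>
      intro G _ _ hle
      have : 0 < Nat.card G := Nat.card_pos
      omega
  | succ N ihN =>
    intro G _ _ hle ι H hsn
    by_cases hJtop : (⨆ i, H i) = ⊤
    · rw [hJtop]; exact Relation.ReflTransGen.refl
    have hnt : Nontrivial G := by
      obtain ⟨g, hg⟩ : ∃ g, g ∉ (⨆ i, H i) := by
        by_contra hcon
        push_neg at hcon
        exact hJtop ((Subgroup.eq_top_iff' _).mpr hcon)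
      exact ⟨g, 1, fun e => hg (e ▸ Subgroup.one_mem _)⟩
    have hSne : ({V : Subgroup G | V.Normal ∧ V ≠ ⊥}).Nonempty := by
      refine ⟨⊤, ⟨fun n _ g => trivial⟩, ?_⟩
      rw [Subgroup.ne_bot_iff_exists_ne_one]
      obtain ⟨a, ha⟩ := exists_ne (1 : G)
      exact ⟨⟨a, trivial⟩, fun hc => ha (by simpa [Subtype.ext_iff] using hc)⟩
    obtain ⟨V, ⟨hVn, hVbot⟩, hVmin⟩ := exists_minimal_subgroup _ hSne
    by_cases hT : (⨆ i, H i) ⊔ V = ⊤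
    · -- V normalizes the join, which is then normal
      have hkey : ∀ i, ∀ v ∈ V, ∀ h ∈ H i, v * h * v⁻¹ ∈ H i := fun i =>
        min_normal_normalizes (N + 1) G hle V (H i) hVn hVbot
          (fun U a b c => hVmin U ⟨a, b⟩ c) (hsn i)
      have hpci : ∀ v ∈ V, ∀ i, pconj v (H i) = H i := by
        intro v hv i
        apply le_antisymm
        · intro x hx
          rw [mem_pconj] at hx
          have := hkey i v hv _ hx
          have e : v * (v⁻¹ * x * v) * v⁻¹ = x := by group
          rwa [e] at this
        · intro x hx
          rw [mem_pconj]
          have := hkey i v⁻¹ (V.inv_mem hv) x hx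
          have e : v⁻¹ * x * v⁻¹⁻¹ = v⁻¹ * x * v := by group
          rwa [e] at this
      have hpc : ∀ v ∈ V, pconj v (⨆ i, H i) = ⨆ i, H i := by
        intro v hv
        calc pconj v (⨆ i, H i) = (⨆ i, H i).map (MulAut.conj v).toMonoidHom :=
              pconj_eq_map v _
          _ = ⨆ i, (H i).map (MulAut.conj v).toMonoidHom := Subgroup.map_iSup _ _
          _ = ⨆ i, H i := iSup_congr fun i => by
              rw [← pconj_eq_map]; exact hpci v hv i
      have hVnorm : V ≤ Subgroup.normalizer ((⨆ i, H i : Subgroup G) : Set G) := by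
        intro v hv
        rw [Subgroup.mem_normalizer_iff]
        intro n
        constructor
        · intro hn
          have : v * n * v⁻¹ ∈ pconj v (⨆ i, H i) := mem_pconj' hn
          rwa [hpc v hv] at this
        · intro hn
          rw [← hpc v hv, mem_pconj] at hn
          have e : v⁻¹ * (v * n * v⁻¹) * v = n := by group
          rwa [e] at hn
      have hJn : (⨆ i, H i).Normal := by
        rw [← Subgroup.normalizer_eq_top_iff, eq_top_iff, ← hT]
        exact sup_le Subgroup.le_normalizer hVnorm
      exact Relation.ReflTransGen.single ⟨le_top, fun b _ a ha => hJn.conj_mem a ha b⟩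
    · -- T = J ⊔ V is a proper subgroup
      have hHT : ∀ i, H i ≤ (⨆ i, H i) ⊔ V := fun i => (le_iSup H i).trans le_sup_left
      have h1 : SnIn (⨆ i, H i) ((⨆ i, H i) ⊔ V) := by
        have hcard : Nat.card ((⨆ i, H i) ⊔ V : Subgroup G) ≤ N := by
          have := card_lt_of_ne_top (G := G) hT
          omega
        have hsn' : ∀ i, SnIn ((H i).subgroupOf ((⨆ i, H i) ⊔ V)) ⊤ := by
          intro i
          have h2 := SnIn.inf ((⨆ i, H i) ⊔ V) (hsn i)
          rw [inf_eq_left.mpr (hHT i), top_inf_eq] at h2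
          have := SnIn.subgroupOf ((⨆ i, H i) ⊔ V) h2
          rwa [Subgroup.subgroupOf_self] at this
        have hmain := ihN (((⨆ i, H i) ⊔ V : Subgroup G)) hcard
          (fun i => (H i).subgroupOf ((⨆ i, H i) ⊔ V)) hsn'
        rw [iSup_subgroupOf H _ hHT] at hmain
        have h3 := SnIn.map ((⨆ i, H i) ⊔ V).subtype hmain
        rwa [Subgroup.subgroupOf_map_subtype,
          inf_eq_left.mpr (le_sup_left : (⨆ i, H i) ≤ (⨆ i, H i) ⊔ V),
          ← MonoidHom.range_eq_map, Subgroup.range_subtype] at h3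
      have h2 : SnIn ((⨆ i, H i) ⊔ V) ⊤ := by
        haveI := hVn
        have hcard : Nat.card (G ⧸ V) ≤ N := by
          have := card_quotient_lt (V := V) hVbot
          omega
        have hsn' : ∀ i, SnIn ((H i).map (QuotientGroup.mk' V)) ⊤ := by
          intro i
          have := SnIn.map (QuotientGroup.mk' V) (hsn i)
          rwa [← MonoidHom.range_eq_map,
            MonoidHom.range_eq_top_of_surjective _ (QuotientGroup.mk'_surjective V)] at this
        have hmain := ihN (G ⧸ V) hcard (fun i => (H i).map (QuotientGroup.mk' V)) hsn'
        rw [← Subgroup.map_iSup] at hmain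
        have h3 := SnIn.comap (QuotientGroup.mk' V) hmain
        rwa [Subgroup.comap_top, Subgroup.comap_map_eq, QuotientGroup.ker_mk'] at h3
      exact h1.trans h2

end Aux

/-- The join of finitely many subnormal subgroups is subnormal. -/
theorem stmt2 {G : Type*} [Group G] [Finite G] (n : ℕ) (H : Fin n → Subgroup G)
    (h : ∀ i, IsSubnormal (H i)) : IsSubnormal (⨆ i, H i) :=
  isSubnormal_iff_snIn.mpr
    (snIn_iSup (Nat.card G) G le_rfl H fun i => isSubnormal_iff_snIn.mp (h i))
end

section
/- Let G be a finite group, π a set of primes, N the Fitting subgroup of G, and H a π-submaximal subgroup of G. Then H ∩ N equals O_π(N), the unique π-Hall subgroup of the nilpotent group N. -/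
/-- `H` is a `π`-subgroup: every prime dividing `|H|` lies in `π`. -/
def IsPiSubgroup (π : Set ℕ) {G : Type*} [Group G] (H : Subgroup G) : Prop :=
  ∀ p : ℕ, p.Prime → p ∣ Nat.card H → p ∈ π

section Helpers

variable {π : Set ℕ}

lemma isPi_bot {Y : Type*} [Group Y] : IsPiSubgroup π (⊥ : Subgroup Y) := by
  intro p hp hd
  simp [Subgroup.card_bot] at hd
  exact absurd hd hp.ne_one

lemma isPi_of_card_dvd {Y Z : Type*} [Group Y] [Group Z] {A : Subgroup Y} {B : Subgroup Z}
    (h : Nat.card A ∣ Nat.card B) (hB : IsPiSubgroup π B) : IsPiSubgroup π A :=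
  fun p pp hd => hB p pp (hd.trans h)

lemma isPi_of_le {Y : Type*} [Group Y] {A B : Subgroup Y} (h : A ≤ B)
    (hB : IsPiSubgroup π B) : IsPiSubgroup π A :=
  isPi_of_card_dvd (Subgroup.card_dvd_of_le h) hB

lemma card_subgroupOf {Y : Type*} [Group Y] {A B : Subgroup Y} (h : A ≤ B) :
    Nat.card (A.subgroupOf B) = Nat.card A :=
  Nat.card_congr (Subgroup.subgroupOfEquivOfLe h).toEquiv

lemma card_map_of_injective {Y Z : Type*} [Group Y] [Group Z] (A : Subgroup Y)
    (f : Y →* Z) (hf : Function.Injective f) : Nat.card (A.map f) = Nat.card A :=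
  (Nat.card_congr (A.equivMapOfInjective f hf).toEquiv).symm

lemma isPi_sup_of_normal {Y : Type*} [Group Y] [Finite Y] {A B : Subgroup Y} [B.Normal]
    (hA : IsPiSubgroup π A) (hB : IsPiSubgroup π B) : IsPiSubgroup π (A ⊔ B) := by
  intro p pp hd
  have h1 : Nat.card (B.subgroupOf (A ⊔ B)) * (B.subgroupOf (A ⊔ B)).index
      = Nat.card (A ⊔ B : Subgroup Y) := Subgroup.card_mul_index _
  have h2 : Nat.card (B.subgroupOf (A ⊔ B)) = Nat.card B := card_subgroupOf le_sup_right
  have h3 : (B.subgroupOf (A ⊔ B)).index = B.relIndex A := Subgroup.relIndex_sup_right A B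
  have h4 : B.relIndex A ∣ Nat.card A := (B.subgroupOf A).index_dvd_card
  have : Nat.card (A ⊔ B : Subgroup Y) ∣ Nat.card B * Nat.card A := by
    rw [← h1, h2, h3]
    exact mul_dvd_mul_left _ h4
  rcases (Nat.Prime.dvd_mul pp).mp (hd.trans this) with h | h
  · exact hB p pp h
  · exact hA p pp h

/-- The `π`-core: join of all normal `π`-subgroups. -/
noncomputable def piCore (π : Set ℕ) (Y : Type*) [Group Y] : Subgroup Y :=
  ⨆ P : {P : Subgroup Y // P.Normal ∧ IsPiSubgroup π P}, (P : Subgroup Y)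

lemma piCore_spec (Y : Type*) [Group Y] [Finite Y] :
    (piCore π Y).Normal ∧ IsPiSubgroup π (piCore π Y) := by
  have : Fintype {P : Subgroup Y // P.Normal ∧ IsPiSubgroup π P} := Fintype.ofFinite _
  rw [piCore, ← Finset.sup_univ_eq_iSup]
  refine Finset.sup_induction (p := fun X : Subgroup Y => X.Normal ∧ IsPiSubgroup π X)
    ⟨inferInstance, isPi_bot⟩ ?_ (fun b _ => b.2)
  rintro a ⟨na, pa⟩ b ⟨nb, pb⟩
  exact ⟨@Subgroup.sup_normal _ _ a b na nb, isPi_sup_of_normal pa pb⟩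

lemma le_piCore {Y : Type*} [Group Y] {P : Subgroup Y} (hn : P.Normal)
    (hp : IsPiSubgroup π P) : P ≤ piCore π Y :=
  le_iSup (fun Q : {P : Subgroup Y // P.Normal ∧ IsPiSubgroup π P} => (Q : Subgroup Y))
    ⟨P, hn, hp⟩

/-- Conjugation by any element of `Y` preserves the image of the π-core of a normal
subgroup `M`. -/
lemma conj_mem_map_piCore {Y : Type*} [Group Y] [Finite Y] {M : Subgroup Y} [M.Normal]
    (y : Y) {x : Y} (hx : x ∈ (piCore π M).map M.subtype) :
    y * x * y⁻¹ ∈ (piCore π M).map M.subtype := by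
  obtain ⟨m, hm, rfl⟩ := hx
  have key : (piCore π M).map (MulAut.conjNormal y : MulAut M).toMonoidHom ≤ piCore π M := by
    apply le_piCore
    · exact (piCore_spec (Y := M)).1.map _ (MulEquiv.surjective _)
    · refine isPi_of_card_dvd ?_ (piCore_spec (Y := M)).2
      rw [card_map_of_injective _ _ (MulEquiv.injective _)]
  have hmem : (MulAut.conjNormal y : MulAut M) m ∈ piCore π M :=
    key ⟨m, hm, rfl⟩
  refine ⟨_, hmem, ?_⟩
  simp [MulAut.conjNormal_apply]

end Helpers

/-- `H` is `π`-maximal: maximal under inclusion among `π`-subgroups. -/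
def IsPiMaximal (π : Set ℕ) {G : Type*} [Group G] (H : Subgroup G) : Prop :=
  IsPiSubgroup π H ∧ ∀ K : Subgroup G, IsPiSubgroup π K → H ≤ K → H = K
/-- `H` is a `π`-Hall subgroup: `|H|` is a `π`-number and `|G : H|` is a `π'`-number. -/
def IsHall (π : Set ℕ) {G : Type*} [Group G] (H : Subgroup G) : Prop :=
  (∀ p : ℕ, p.Prime → p ∣ Nat.card H → p ∈ π) ∧
    ∀ p : ℕ, p.Prime → p ∣ H.index → p ∉ π
/-- `H` is `π`-submaximal in `G`: there is an embedding `φ` of `G` into a finite group `Y`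
with `φ(G)` subnormal in `Y` and `φ(H) = K ∩ φ(G)` for some `π`-maximal subgroup `K` of `Y`. -/
def IsPiSubmaximal (π : Set ℕ) {G : Type} [Group G] (H : Subgroup G) : Prop :=
  ∃ (Y : Type) (_ : Group Y) (_ : Finite Y) (φ : G →* Y),
    Function.Injective φ ∧ IsSubnormal φ.range ∧
    ∃ K : Subgroup Y, IsPiMaximal π K ∧ H.map φ = K ⊓ φ.range


section Part2
variable {π : Set ℕ}

lemma piCore_index_not_pi {Y : Type} [Group Y] [Finite Y] (hnil : Group.IsNilpotent Y) :
    ∀ p : ℕ, p.Prime → p ∣ (piCore π Y).index → p ∉ π := by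
  intro p pp hdvd hpin
  haveI : Fact p.Prime := ⟨pp⟩
  obtain ⟨P⟩ := (inferInstance : Nonempty (Sylow p Y))
  haveI hPn : (↑P : Subgroup Y).Normal := by
    have h4 : ∀ (p : ℕ) (_ : Fact p.Prime) (P : Sylow p Y), (↑P : Subgroup Y).Normal :=
      ((isNilpotent_of_finite_tfae (G := Y)).out 0 3).mp hnil
    exact h4 p ‹_› P
  have hPpi : IsPiSubgroup π (↑P : Subgroup Y) := by
    intro q hq hqd
    rw [P.card_eq_multiplicity] at hqd
    rwa [Nat.prime_dvd_prime_iff_eq hq pp |>.mp (hq.dvd_of_dvd_pow hqd)]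
  have hle : (↑P : Subgroup Y) ≤ piCore π Y := le_piCore hPn hPpi
  exact P.not_dvd_index (hdvd.trans (Subgroup.index_dvd_of_le hle)) |>.elim

lemma le_of_pi_of_index_not_pi {Y : Type} [Group Y] [Finite Y] {A C : Subgroup Y}
    (hAC : A ≤ C) (h1 : ∀ p : ℕ, p.Prime → p ∣ A.index → p ∉ π)
    (h2 : IsPiSubgroup π C) : C ≤ A := by
  rcases eq_or_ne (A.relIndex C) 1 with h | h
  · exact Subgroup.relIndex_eq_one.mp h
  · obtain ⟨p, pp, pd⟩ := Nat.exists_prime_and_dvd h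
    have hpC : p ∣ Nat.card C := pd.trans (A.subgroupOf C).index_dvd_card
    exact absurd (h2 p pp hpC) (h1 p pp (pd.trans (Subgroup.relIndex_dvd_index_of_le hAC)))

lemma le_piCore_of_isPi_of_nilpotent {Y : Type} [Group Y] [Finite Y]
    (hnil : Group.IsNilpotent Y) {B : Subgroup Y} (hB : IsPiSubgroup π B) :
    B ≤ piCore π Y := by
  haveI := (piCore_spec (π := π) Y).1
  have hC : IsPiSubgroup π (B ⊔ piCore π Y) := isPi_sup_of_normal hB (piCore_spec Y).2
  have := le_of_pi_of_index_not_pi (le_sup_right : piCore π Y ≤ B ⊔ piCore π Y)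
    (piCore_index_not_pi hnil) hC
  exact le_sup_left.trans this

lemma eq_piCore_of_hall {Y : Type} [Group Y] [Finite Y] (hnil : Group.IsNilpotent Y)
    {B : Subgroup Y} (hBpi : IsPiSubgroup π B)
    (hBidx : ∀ p : ℕ, p.Prime → p ∣ B.index → p ∉ π) : B = piCore π Y := by
  have h1 := le_piCore_of_isPi_of_nilpotent hnil hBpi
  exact le_antisymm h1 (le_of_pi_of_index_not_pi h1 hBidx (piCore_spec Y).2)

lemma normalIn_of_subgroupOf_normal {Y : Type} [Group Y] {A B : Subgroup Y} (hAB : A ≤ B)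
    (h : (A.subgroupOf B).Normal) : ∀ a ∈ A, ∀ b ∈ B, b * a * b⁻¹ ∈ A := by
  intro a ha b hb
  have := h.conj_mem ⟨a, hAB ha⟩ (Subgroup.mem_subgroupOf.mpr ha) ⟨b, hb⟩
  rw [Subgroup.mem_subgroupOf] at this
  simpa using this

lemma subnormal_le_piCore : ∀ (n : ℕ) (Y : Type) [Group Y] [Finite Y]
    (f : Fin (n + 1) → Subgroup Y), f (Fin.last n) = ⊤ →
    (∀ i : Fin n, f i.castSucc ≤ f i.succ ∧
      ∀ a ∈ f i.castSucc, ∀ b ∈ f i.succ, b * a * b⁻¹ ∈ f i.castSucc) →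
    ∀ P : Subgroup Y, IsPiSubgroup π P → P ≤ f 0 →
      (∀ a ∈ P, ∀ b ∈ f 0, b * a * b⁻¹ ∈ P) → P ≤ piCore π Y := by
  intro n
  induction n with
  | zero =>
    intro Y _ _ f htop _ P hPpi hPle hPn
    have h0 : f 0 = ⊤ := htop
    exact le_piCore ⟨fun a ha g => hPn a ha g (by rw [h0]; trivial)⟩ hPpi
  | succ n ih =>
    intro Y _ _ f htop hstep P hPpi hPle hPn
    set M := f (Fin.last n).castSucc with hM
    have hmono : ∀ i : Fin (n + 2), f 0 ≤ f i := by
      intro i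
      induction i using Fin.induction with
      | zero => exact le_rfl
      | succ i ihi => exact ihi.trans (hstep i).1
    have hPM : P ≤ M := hPle.trans (hmono _)
    haveI hMn : M.Normal := by
      have h := hstep (Fin.last n)
      have htop' : f (Fin.last n).succ = ⊤ := by rw [Fin.succ_last]; exact htop
      exact ⟨fun a ha g => h.2 a ha g (by rw [htop']; trivial)⟩
    have hP' : P.subgroupOf M ≤ piCore π M := by
      refine ih M (fun i => (f i.castSucc).subgroupOf M) ?_ ?_ (P.subgroupOf M) ?_ ?_ ?_
      · show M.subgroupOf M = ⊤
        exact Subgroup.subgroupOf_self M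
      · intro i
        have h := hstep i.castSucc
        rw [Fin.succ_castSucc] at h
        constructor
        · intro x hx
          rw [Subgroup.mem_subgroupOf] at hx ⊢
          exact h.1 hx
        · intro a ha b hb
          rw [Subgroup.mem_subgroupOf] at *
          simpa using h.2 a ha b hb
      · intro p pp hd
        rw [card_subgroupOf hPM] at hd
        exact hPpi p pp hd
      · intro x hx
        rw [Subgroup.mem_subgroupOf] at hx ⊢
        exact hPle hx
      · intro a ha b hb
        rw [Subgroup.mem_subgroupOf] at *
        simpa using hPn a ha b hb
    have hQ : P ≤ (piCore π M).map M.subtype := by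
      have : (P.subgroupOf M).map M.subtype ≤ (piCore π M).map M.subtype :=
        Subgroup.map_mono hP'
      rwa [Subgroup.subgroupOf_map_subtype, inf_eq_left.mpr hPM] at this
    refine hQ.trans (le_piCore ⟨fun x hx y => conj_mem_map_piCore y hx⟩ ?_)
    refine isPi_of_card_dvd ?_ (piCore_spec (π := π) M).2
    rw [card_map_of_injective _ _ M.subtype_injective]

end Part2

/-- If `N` is the Fitting subgroup of `G` and `H` is `π`-submaximal in `G`, then `H ∩ N`
is the unique `π`-Hall subgroup `O_π(N)` of the nilpotent group `N`. -/
theorem stmt17 {G : Type} [Group G] [Finite G] (π : Set ℕ) (N H : Subgroup G)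
    [N.Normal] (hnil : Group.IsNilpotent N)
    (hfit : ∀ M : Subgroup G, M.Normal → Group.IsNilpotent M → M ≤ N)
    (hH : IsPiSubmaximal π H) :
    IsHall π ((H ⊓ N).subgroupOf N) ∧
    ∀ B : Subgroup G, B ≤ N → IsHall π (B.subgroupOf N) → B = H ⊓ N := by
  obtain ⟨Y, iG, iF, φ, hinj, ⟨n, f, hf0, hftop, hfstep⟩, K, ⟨hKpi, hKmax⟩, hHK⟩ := hH
  set O : Subgroup G := (piCore π N).map N.subtype with hO
  have hON : O ≤ N := Subgroup.map_subtype_le _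
  have hONormal : O.Normal := ⟨fun x hx y => conj_mem_map_piCore y hx⟩
  have hOpi : IsPiSubgroup π O :=
    isPi_of_card_dvd (by rw [card_map_of_injective _ _ N.subtype_injective]) (piCore_spec N).2
  -- the image of O in Y is a subnormal π-subgroup, hence lies in the π-core of Y, hence in K
  have hstep' : ∀ i : Fin n, f i.castSucc ≤ f i.succ ∧
      ∀ a ∈ f i.castSucc, ∀ b ∈ f i.succ, b * a * b⁻¹ ∈ f i.castSucc :=
    fun i => ⟨(hfstep i).1, normalIn_of_subgroupOf_normal (hfstep i).1 (hfstep i).2⟩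
  have hPpi : IsPiSubgroup π (O.map φ) :=
    isPi_of_card_dvd (by rw [card_map_of_injective _ _ hinj]) hOpi
  have hPle : O.map φ ≤ f 0 := by rw [hf0]; exact Subgroup.map_le_range φ O
  have hPn : ∀ a ∈ O.map φ, ∀ b ∈ f 0, b * a * b⁻¹ ∈ O.map φ := by
    rw [hf0]
    rintro a ⟨o, ho, rfl⟩ b ⟨g, rfl⟩
    exact ⟨g * o * g⁻¹, hONormal.conj_mem o ho g, by simp [map_mul]⟩
  have hPcore : O.map φ ≤ piCore π Y :=
    subnormal_le_piCore n Y f hftop hstep' (O.map φ) hPpi hPle hPn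
  have hcoreK : piCore π Y ≤ K := by
    haveI := (piCore_spec (π := π) Y).1
    have hsup : IsPiSubgroup π (K ⊔ piCore π Y) := isPi_sup_of_normal hKpi (piCore_spec Y).2
    have := hKmax _ hsup le_sup_left
    exact le_sup_right.trans this.symm.le
  have hOH : O ≤ H := by
    have : O.map φ ≤ H.map φ := by
      rw [hHK]
      exact le_inf (hPcore.trans hcoreK) (Subgroup.map_le_range φ O)
    exact (Subgroup.map_le_map_iff_of_injective hinj).mp this
  -- conversely, H ⊓ N is a π-subgroup of the nilpotent group N
  have hHNpi : IsPiSubgroup π ((H ⊓ N).subgroupOf N) := by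
    have hd : Nat.card ((H ⊓ N).subgroupOf N) ∣ Nat.card K := by
      rw [card_subgroupOf inf_le_right, ← card_map_of_injective (H ⊓ N) φ hinj]
      refine Subgroup.card_dvd_of_le ((Subgroup.map_mono inf_le_left).trans ?_)
      rw [hHK]
      exact inf_le_left
    exact isPi_of_card_dvd hd hKpi
  have hmain : H ⊓ N = O := by
    refine le_antisymm ?_ (le_inf hOH hON)
    have h1 : (H ⊓ N).subgroupOf N ≤ piCore π N := le_piCore_of_isPi_of_nilpotent hnil hHNpi
    have := Subgroup.map_mono (f := N.subtype) h1
    rwa [Subgroup.subgroupOf_map_subtype, inf_eq_left.mpr inf_le_right] at this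
  have hsub : (H ⊓ N).subgroupOf N = piCore π N := by
    rw [hmain, hO, Subgroup.subgroupOf, Subgroup.comap_map_eq_self_of_injective N.subtype_injective]
  constructor
  · rw [hsub]
    exact ⟨(piCore_spec N).2, piCore_index_not_pi hnil⟩
  · intro B hBN hBHall
    have : B.subgroupOf N = piCore π N := eq_piCore_of_hall hnil hBHall.1 hBHall.2
    have hmaps := congrArg (Subgroup.map N.subtype) (this.trans hsub.symm)
    rwa [Subgroup.subgroupOf_map_subtype, Subgroup.subgroupOf_map_subtype,
      inf_eq_left.mpr hBN, inf_eq_left.mpr inf_le_right] at hmaps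
end
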